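/- Let p ∈ (0,1) and 0 < s < r. The equation r·e^{st} − s·e^{rt} + (r−s)·((1−p)/p) = 0 has exactly one solution t* in (0,∞). -/

import Mathlib

theorem stmt_10 (p s r : ℝ) (hp : 0 < p) (hp1 : p < 1) (hs : 0 < s) (hsr : s < r) :
    ∃! t : ℝ, 0 < t ∧
      r * Real.exp (s * t) - s * Real.exp (r * t) + (r - s) * ((1 - p) / p) = 0 := by
  set c : ℝ := (r - s) * ((1 - p) / p) with hcdef
  have hc : 0 < c := by
    apply mul_pos (by linarith)
    exact div_pos (by linarith) hp
  set f : ℝ → ℝ := fun t => r * Real.exp (s * t) - s * Real.exp (r * t) + c with hf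
  have hr : 0 < r := hs.trans hsr
  have hderiv : ∀ t : ℝ, HasDerivAt f (r * s * Real.exp (s * t) - s * r * Real.exp (r * t)) t := by
    intro t
    have h1 : HasDerivAt (fun t : ℝ => Real.exp (s * t)) (Real.exp (s * t) * s) t :=
      by simpa using ((hasDerivAt_id t).const_mul s).exp
    have h2 : HasDerivAt (fun t : ℝ => Real.exp (r * t)) (Real.exp (r * t) * r) t :=
      by simpa using ((hasDerivAt_id t).const_mul r).exp
    have := ((h1.const_mul r).sub (h2.const_mul s)).add_const c
    exact this.congr_deriv (by ring)
  have hcont : Continuous f := by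
    have := fun t => (hderiv t).continuousAt
    exact continuous_iff_continuousAt.mpr this
  -- strict anti on Ici 0
  have hanti : StrictAntiOn f (Set.Ici (0:ℝ)) := by
    apply strictAntiOn_of_deriv_neg (convex_Ici 0) hcont.continuousOn
    intro t ht
    rw [interior_Ici] at ht
    rw [(hderiv t).deriv]
    have hlt : Real.exp (s * t) < Real.exp (r * t) := by
      apply Real.exp_lt_exp.mpr
      exact mul_lt_mul_of_pos_right hsr ht
    nlinarith [mul_pos hr hs]
  have hf0 : 0 < f 0 := by
    simp only [hf, mul_zero, Real.exp_zero, mul_one]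
    linarith
  -- find T with f T < 0
  set T : ℝ := Real.log ((r + c) / s + 1) / (r - s) with hT
  have hquot : 1 < (r + c) / s + 1 := by
    have : 0 < (r + c) / s := div_pos (by linarith) hs
    linarith
  have hTpos : 0 < T := div_pos (Real.log_pos hquot) (by linarith)
  have hfT : f T < 0 := by
    have h1 : (r - s) * T = Real.log ((r + c) / s + 1) := by
      rw [hT, mul_div_cancel₀ _ (by linarith : r - s ≠ 0)]
    have h2 : Real.exp ((r - s) * T) = (r + c) / s + 1 := by
      rw [h1, Real.exp_log (by linarith)]
    have h3 : Real.exp (r * T) = Real.exp ((r - s) * T) * Real.exp (s * T) := by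
      rw [← Real.exp_add]; ring_nf
    have h4 : (1:ℝ) ≤ Real.exp (s * T) := by
      apply Real.one_le_exp
      positivity
    have h5 : s * Real.exp (r * T) = (r + c) * Real.exp (s * T) + s * Real.exp (s * T) := by
      rw [h3, h2]; field_simp
    have hexp : 0 < Real.exp (s * T) := Real.exp_pos _
    simp only [hf]
    nlinarith
  -- existence via IVT
  have hsub := intermediate_value_Icc' (le_of_lt hTpos) hcont.continuousOn
  have h0mem : (0:ℝ) ∈ Set.Icc (f T) (f 0) := ⟨le_of_lt hfT, le_of_lt hf0⟩
  obtain ⟨t, htmem, htroot⟩ := hsub h0mem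
  have htpos : 0 < t := by
    rcases lt_or_eq_of_le htmem.1 with h | h
    · exact h
    · exfalso; rw [← h] at htroot; linarith [htroot ▸ hf0]
  refine ⟨t, ⟨htpos, htroot⟩, ?_⟩
  rintro u ⟨hupos, huroot⟩
  have h1 : f u = f t := by rw [htroot]; exact huroot
  exact hanti.injOn (le_of_lt hupos) (le_of_lt htpos) h1
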